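/- Fix an adversary strategy (Ã₁,…,Ã_M) ∈ 𝒮_A(Δ) and let Q_max = max_{i∈[M]} ( −log min_{y∈𝒳} (P_iÃ_i)(y) ). Then for every i ∈ [M], under H_i the stopping time satisfies P_i(T* ≤ n) = 0 for every integer n < log(1/α)/Q_max; consequently T* ≥ log(1/α)/Q_max holds P_i-almost surely, and T* → ∞ P_i-almost surely as α → 0⁺. -/
import Mathlib


open MeasureTheory Filter Finset Set Topology
open scoped ENNReal NNReal ENat

namespace AHT

noncomputable section

variable {X : Type*}

/-- A probability distribution on a finite alphabet. -/
def IsDist [Fintype X] (P : X → ℝ) : Prop :=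
  (∀ x, 0 ≤ P x) ∧ ∑ x, P x = 1

/-- Kullback–Leibler divergence. -/
def KL [Fintype X] (P Q : X → ℝ) : ℝ :=
  ∑ a, P a * Real.log (P a / Q a)

/-- Bhattacharyya distance. -/
def Bhat [Fintype X] (Q0 Q1 : X → ℝ) : ℝ :=
  -Real.log (∑ x, (Q0 x) ^ ((1 : ℝ) / 2) * (Q1 x) ^ ((1 : ℝ) / 2))

/-- Empirical distribution (type) of the first `n` samples. -/
def emp [Fintype X] [DecidableEq X] (n : ℕ) (ω : ℕ → X) (a : X) : ℝ :=
  (((Finset.range n).filter fun k => ω k = a).card : ℝ) / n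

/-- Row-stochastic matrix (adversary channel). -/
def RowStoch [Fintype X] (A : X → X → ℝ) : Prop :=
  (∀ x y, 0 ≤ A x y) ∧ ∀ x, ∑ y, A x y = 1

/-- Output distribution of channel `A` when the input distribution is `P`. -/
def push [Fintype X] (P : X → ℝ) (A : X → X → ℝ) (y : X) : ℝ :=
  ∑ x, P x * A x y

/-- `μ` is the law of an i.i.d. sequence with one-dimensional marginal `Q`. -/
def IsIID [Fintype X] [MeasurableSpace X] (μ : Measure (ℕ → X)) (Q : X → ℝ) : Prop :=
  IsProbabilityMeasure μ ∧
    ∀ (n : ℕ) (v : Fin n → X),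
      μ {ω | ∀ k : Fin n, ω (k : ℕ) = v k} = ENNReal.ofReal (∏ k, Q (v k))

/-- Admissible adversary channels for hypothesis distribution `Pi`. -/
def Adm [Fintype X] (d : (X → ℝ) → (X → ℝ) → ℝ) (Δ : ℝ) (Pi : X → ℝ) :
    Set (X → X → ℝ) :=
  {A | RowStoch A ∧ d Pi (push Pi A) ≤ Δ ∧ ∀ y, 0 < push Pi A y}

/-- The constant `C = Σ_{n ≥ 1} e^{-n^{1-ζ}}` with `ζ = 0.85`. -/
def Cζ : ℝ := ∑' n : ℕ, Real.exp (-((n : ℝ) + 1) ^ (0.15 : ℝ))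

/-- The thresholds `γ_n` (with `K = |𝒳|`). -/
def gammaTh (K M : ℕ) (α : ℝ) (n : ℕ) : ℝ :=
  Real.log (Cζ / α) / n + 1 / (n : ℝ) ^ (0.85 : ℝ) +
    ((K : ℝ) * Real.log ((n : ℝ) + 1) + Real.log ((M : ℝ) - 1)) / n

/-- The statistic `Z_i^{(n)}`. -/
def Zstat [Fintype X] [DecidableEq X] {M : ℕ} (P : Fin M → X → ℝ)
    (d : (X → ℝ) → (X → ℝ) → ℝ) (Δ : ℝ) (i : Fin M) (n : ℕ) (ω : ℕ → X) : ℝ :=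
  sInf {r | ∃ j, j ≠ i ∧ ∃ A ∈ Adm d Δ (P j), r = KL (emp n ω) (push (P j) A)}

/-- The one-sided stopping times `T_i`. -/
def Ti [Fintype X] [DecidableEq X] {M : ℕ} (P : Fin M → X → ℝ)
    (d : (X → ℝ) → (X → ℝ) → ℝ) (Δ α : ℝ) (i : Fin M) (ω : ℕ → X) : ℕ∞ :=
  sInf {t : ℕ∞ | ∃ n : ℕ, t = (n : ℕ∞) ∧ 1 ≤ n ∧
    gammaTh (Fintype.card X) M α n ≤ Zstat P d Δ i n ω}

/-- The stopping time `T*`. -/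
def Tstar [Fintype X] [DecidableEq X] {M : ℕ} (P : Fin M → X → ℝ)
    (d : (X → ℝ) → (X → ℝ) → ℝ) (Δ α : ℝ) (ω : ℕ → X) : ℕ∞ :=
  ⨅ i, Ti P d Δ α i ω

/-- Expected value of an `ℕ∞`-valued stopping time. -/
def ExpT [MeasurableSpace X] (μ : Measure (ℕ → X)) (T : (ℕ → X) → ℕ∞) : ℝ :=
  (∫⁻ ω, ((T ω : ℕ∞) : ℝ≥0∞) ∂μ).toReal

/-- Thresholds in the binary non-aware setting. -/
def gammaNA (K : ℕ) (α : ℝ) (n : ℕ) : ℝ :=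
  Real.log (Cζ / α) / n + 1 / (n : ℝ) ^ (0.85 : ℝ) + (K : ℝ) * Real.log ((n : ℝ) + 1) / n

/-- Admissible common channels in the non-aware setting. -/
def AdmNA [Fintype X] (d : (X → ℝ) → (X → ℝ) → ℝ) (Δ : ℝ) (P0 P1 : X → ℝ) :
    Set (X → X → ℝ) :=
  {A | RowStoch A ∧ max (d P0 (push P0 A)) (d P1 (push P1 A)) ≤ Δ ∧
    (∀ y, 0 < push P0 A y) ∧ ∀ y, 0 < push P1 A y}

/-- The statistic `S_n` in the non-aware setting. -/
def Sstat [Fintype X] [DecidableEq X] (P0 P1 : X → ℝ)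
    (d : (X → ℝ) → (X → ℝ) → ℝ) (Δ : ℝ) (n : ℕ) (ω : ℕ → X) : ℝ :=
  sInf {r | ∃ A ∈ AdmNA d Δ P0 P1,
    r = max (KL (emp n ω) (push P0 A)) (KL (emp n ω) (push P1 A))}

/-- Stopping time `τ*` of the non-aware test. -/
def tauNA [Fintype X] [DecidableEq X] (P0 P1 : X → ℝ)
    (d : (X → ℝ) → (X → ℝ) → ℝ) (Δ α : ℝ) (ω : ℕ → X) : ℕ∞ :=
  sInf {t : ℕ∞ | ∃ n : ℕ, t = (n : ℕ∞) ∧ 1 ≤ n ∧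
    gammaNA (Fintype.card X) α n ≤ Sstat P0 P1 d Δ n ω}

/-- A sequential test: a stopping time together with an `F_T`-measurable decision,
expressed functionally (the stopping decision and the final decision depend only on
the samples observed up to the stopping time). -/
structure SeqTest (X : Type*) (M : ℕ) where
  T : (ℕ → X) → ℕ∞
  dec : (ℕ → X) → Fin M
  adapted : ∀ ω ω' : ℕ → X, ∀ n : ℕ, T ω = (n : ℕ∞) →
    (∀ k < n, ω k = ω' k) → T ω' = (n : ℕ∞) ∧ dec ω' = dec ω

/-- Membership in the decision maker's strategy set `𝒮_D(α)`: all error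
probabilities are at most `α` whatever admissible strategy the adversary uses,
and the expected stopping times are finite. -/
def InSD [Fintype X] [MeasurableSpace X] {M : ℕ} (P : Fin M → X → ℝ)
    (d : (X → ℝ) → (X → ℝ) → ℝ) (Δ α : ℝ) (Φ : SeqTest X M) : Prop :=
  ∀ B : Fin M → X → X → ℝ, (∀ i, B i ∈ Adm d Δ (P i)) →
    ∀ ν : Fin M → Measure (ℕ → X), (∀ i, IsIID (ν i) (push (P i) (B i))) →
      ∀ i, ν i {ω | Φ.dec ω ≠ i} ≤ ENNReal.ofReal α ∧
        ∫⁻ ω, ((Φ.T ω : ℕ∞) : ℝ≥0∞) ∂(ν i) < ⊤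


section AuxLemmas

lemma exists_ciInf_eq_min [Fintype X] [Nonempty X] (f : X → ℝ) :
    ∃ x₀, (⨅ y, f y) = f x₀ ∧ ∀ y, f x₀ ≤ f y := by
  obtain ⟨x₀, hx₀⟩ := Finite.exists_min f
  exact ⟨x₀, le_antisymm (ciInf_le (Set.Finite.bddBelow (Set.finite_range f)) x₀)
    (le_ciInf hx₀), hx₀⟩

lemma summable_Cz : Summable (fun n : ℕ => Real.exp (-((n : ℝ) + 1) ^ (0.15 : ℝ))) := by
  have h1 : (fun x : ℝ => Real.exp (-1 * x)) =o[atTop]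
      fun x : ℝ => x ^ ((-2 : ℝ)/(0.15 : ℝ)) :=
    isLittleO_exp_neg_mul_rpow_atTop one_pos _
  have h2 : Tendsto (fun x : ℝ => x ^ (0.15 : ℝ)) atTop atTop :=
    tendsto_rpow_atTop (by norm_num)
  have h4 : (fun x : ℝ => Real.exp (-(x ^ (0.15 : ℝ)))) =o[atTop]
      fun x : ℝ => x ^ (-2 : ℝ) := by
    refine (h1.comp_tendsto h2).congr' ?_ ?_
    · filter_upwards with x
      simp [Function.comp, neg_one_mul]
    · filter_upwards [eventually_ge_atTop (0 : ℝ)] with x hx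
      simp only [Function.comp]
      rw [← Real.rpow_mul hx]
      norm_num
  have h5 := h4.comp_tendsto
    (tendsto_atTop_add_const_right atTop (1 : ℝ) tendsto_natCast_atTop_atTop)
  have hg : Summable (fun n : ℕ => ((n : ℝ) + 1) ^ (-2 : ℝ)) := by
    have := (summable_nat_add_iff 1).mpr (Real.summable_nat_rpow.mpr (by norm_num : (-2:ℝ) < -1))
    refine this.congr fun n => ?_
    push_cast
    ring_nf
  exact summable_of_isBigO_nat hg h5.isBigO

lemma Cz_ge_one : (1 : ℝ) ≤ Cζ := by
  have hterm : ∀ n ∈ Finset.range 8,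
      Real.exp (-2 : ℝ) ≤ Real.exp (-((n : ℝ) + 1) ^ (0.15 : ℝ)) := by
    intro n hn
    apply Real.exp_le_exp.mpr
    rw [neg_le_neg_iff]
    have hn8 : (n : ℝ) + 1 ≤ 8 := by
      have := Finset.mem_range.mp hn
      have : (n : ℝ) ≤ 7 := by exact_mod_cast Nat.lt_succ_iff.mp this
      linarith
    calc ((n : ℝ) + 1) ^ (0.15 : ℝ) ≤ (8 : ℝ) ^ (0.15 : ℝ) :=
          Real.rpow_le_rpow (by positivity) hn8 (by norm_num)
      _ ≤ (8 : ℝ) ^ ((1 : ℝ)/3) :=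
          Real.rpow_le_rpow_of_exponent_le (by norm_num) (by norm_num)
      _ = 2 := by
          rw [show (8 : ℝ) = (2 : ℝ) ^ (3 : ℕ) by norm_num, ← Real.rpow_natCast 2 3,
            ← Real.rpow_mul (by norm_num)]
          norm_num
  have hpart : ∑ n ∈ Finset.range 8, Real.exp (-((n : ℝ) + 1) ^ (0.15 : ℝ)) ≤ Cζ :=
    Summable.sum_le_tsum _ (fun n _ => (Real.exp_pos _).le) summable_Cz
  have h8 : (1 : ℝ) ≤ 8 * Real.exp (-2 : ℝ) := by
    have he : Real.exp 1 < 2.7182818286 := Real.exp_one_lt_d9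
    have h2 : Real.exp 2 < 8 := by
      have hE : Real.exp 2 = Real.exp 1 * Real.exp 1 := by
        rw [← Real.exp_add]; norm_num
      nlinarith [Real.exp_pos 1]
    rw [Real.exp_neg]
    rw [show (8 : ℝ) * (Real.exp 2)⁻¹ = 8 / Real.exp 2 by ring]
    rw [le_div_iff₀ (Real.exp_pos 2)]
    linarith
  calc (1 : ℝ) ≤ 8 * Real.exp (-2) := h8
    _ = ∑ _n ∈ Finset.range 8, Real.exp (-2 : ℝ) := by
        rw [Finset.sum_const, Finset.card_range, nsmul_eq_mul]; norm_num
    _ ≤ ∑ n ∈ Finset.range 8, Real.exp (-((n : ℝ) + 1) ^ (0.15 : ℝ)) :=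
        Finset.sum_le_sum hterm
    _ ≤ Cζ := hpart

lemma emp_nonneg [Fintype X] [DecidableEq X] (n : ℕ) (ω : ℕ → X) (a : X) :
    0 ≤ emp n ω a := by
  unfold emp; positivity

lemma emp_sum [Fintype X] [DecidableEq X] {n : ℕ} (hn : 1 ≤ n) (ω : ℕ → X) :
    ∑ a, emp n ω a = 1 := by
  have hcard : ∑ a : X, (((Finset.range n).filter fun k => ω k = a).card : ℝ) = n := by
    rw [← Nat.cast_sum]
    norm_cast
    exact (Finset.card_eq_sum_card_fiberwise
      (f := ω) (fun k _ => Finset.mem_univ (ω k))).symm.trans (Finset.card_range n)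
  unfold emp
  rw [← Finset.sum_div, hcard, div_self]
  have : (0 : ℝ) < n := by exact_mod_cast hn
  exact this.ne'

lemma push_sum [Fintype X] {P : X → ℝ} {A : X → X → ℝ} (hP : IsDist P) (hA : RowStoch A) :
    ∑ y, push P A y = 1 := by
  unfold push
  rw [Finset.sum_comm]
  calc ∑ x, ∑ y, P x * A x y = ∑ x, P x * ∑ y, A x y := by
        simp [Finset.mul_sum]
    _ = ∑ x, P x := by
        refine Finset.sum_congr rfl fun x _ => ?_
        rw [hA.2 x, mul_one]
    _ = 1 := hP.2

lemma push_le_one [Fintype X] {P : X → ℝ} {A : X → X → ℝ} (hP : IsDist P) (hA : RowStoch A)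
    (y : X) : push P A y ≤ 1 := by
  unfold push
  calc ∑ x, P x * A x y ≤ ∑ x, P x * 1 := by
        refine Finset.sum_le_sum fun x _ => ?_
        refine mul_le_mul_of_nonneg_left ?_ (hP.1 x)
        calc A x y ≤ ∑ y', A x y' :=
              Finset.single_le_sum (fun y' _ => hA.1 x y') (Finset.mem_univ y)
          _ = 1 := hA.2 x
    _ = 1 := by simp [hP.2]

lemma KL_lb [Fintype X] (Qh Q : X → ℝ) (h0 : ∀ a, 0 ≤ Qh a)
    (hQpos : ∀ a, 0 < Q a) (hQle : ∀ a, Q a ≤ 1) :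
    ∑ a, (Qh a - 1) ≤ KL Qh Q := by
  rw [KL]
  refine Finset.sum_le_sum fun a _ => ?_
  rcases eq_or_lt_of_le (h0 a) with h | h
  · rw [← h]; simp
  · have hlog : Real.log (Qh a / Q a) = Real.log (Qh a) - Real.log (Q a) :=
      Real.log_div h.ne' (hQpos a).ne'
    have h2 : Real.log (Q a) ≤ 0 := Real.log_nonpos (hQpos a).le (hQle a)
    have key : -Real.log (Qh a) ≤ (Qh a)⁻¹ - 1 := by
      simpa [Real.log_inv] using Real.log_le_sub_one_of_pos (inv_pos.mpr h)
    have h4 := mul_le_mul_of_nonneg_left key h.le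
    rw [mul_sub, mul_inv_cancel₀ h.ne'] at h4
    have h3 : Qh a - 1 ≤ Qh a * Real.log (Qh a) := by nlinarith
    rw [hlog]
    nlinarith

lemma KL_ub [Fintype X] [Nonempty X] (Qh Q : X → ℝ) (h0 : ∀ a, 0 ≤ Qh a)
    (hsum : ∑ a, Qh a = 1) (hQpos : ∀ a, 0 < Q a) (hQsum : ∑ a, Q a = 1) :
    KL Qh Q ≤ -Real.log (⨅ y, Q y) := by
  obtain ⟨x₀, hx₀, hmin⟩ := exists_ciInf_eq_min Q
  rw [KL, hx₀]
  have hm0 : 0 < Q x₀ := hQpos x₀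
  have hm1 : Q x₀ ≤ 1 := by
    calc Q x₀ ≤ ∑ a, Q a :=
          Finset.single_le_sum (fun a _ => (hQpos a).le) (Finset.mem_univ x₀)
      _ = 1 := hQsum
  have hlognn : 0 ≤ -Real.log (Q x₀) := by
    have := Real.log_nonpos hm0.le hm1
    linarith
  have key : ∀ a, Qh a * Real.log (Qh a / Q a) ≤ Qh a * (-Real.log (Q x₀)) := by
    intro a
    rcases eq_or_lt_of_le (h0 a) with h | h
    · rw [← h]; simp
    · have hQha1 : Qh a ≤ 1 := by
        calc Qh a ≤ ∑ b, Qh b :=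
              Finset.single_le_sum (fun b _ => h0 b) (Finset.mem_univ a)
          _ = 1 := hsum
      refine mul_le_mul_of_nonneg_left ?_ (h0 a)
      rw [Real.log_div h.ne' (hQpos a).ne']
      have h1 : Real.log (Qh a) ≤ 0 := Real.log_nonpos h.le hQha1
      have h2 : Real.log (Q x₀) ≤ Real.log (Q a) := Real.log_le_log hm0 (hmin a)
      linarith
  calc ∑ a, Qh a * Real.log (Qh a / Q a) ≤ ∑ a, Qh a * (-Real.log (Q x₀)) :=
        Finset.sum_le_sum fun a _ => key a
    _ = (∑ a, Qh a) * (-Real.log (Q x₀)) := by rw [← Finset.sum_mul]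
    _ = -Real.log (Q x₀) := by rw [hsum, one_mul]

lemma core_lemma [Fintype X] [DecidableEq X] [Nonempty X] {M : ℕ} (hM : 2 ≤ M)
    (P : Fin M → X → ℝ) (hP : ∀ i, IsDist (P i))
    (d : (X → ℝ) → (X → ℝ) → ℝ) (Δ : ℝ)
    (Atil : Fin M → X → X → ℝ) (hAtil : ∀ i, Atil i ∈ Adm d Δ (P i))
    (Qmax : ℝ) (hQmax : Qmax = ⨆ i : Fin M, -Real.log (⨅ y : X, push (P i) (Atil i) y))
    (hQpos : 0 < Qmax) (β : ℝ) (hβ : 0 < β) (ω : ℕ → X) (n : ℕ)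
    (hn : (n : ℝ) < Real.log (1 / β) / Qmax) :
    (n : ℕ∞) < Tstar P d Δ β ω := by
  have hL : (n : ℝ) * Qmax < Real.log (1 / β) := (lt_div_iff₀ hQpos).mp hn
  have key : ∀ (i' : Fin M) (m : ℕ), 1 ≤ m → m ≤ n →
      Zstat P d Δ i' m ω < gammaTh (Fintype.card X) M β m := by
    intro i' m hm1 hmn
    have hnt : Nontrivial (Fin M) :=
      ⟨⟨0, by omega⟩, ⟨1, by omega⟩, by simp [Fin.ext_iff]⟩
    obtain ⟨j, hj⟩ := exists_ne i'
    obtain ⟨hRS, _, hpos⟩ := hAtil j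
    have hQjsum : ∑ y, push (P j) (Atil j) y = 1 := push_sum (hP j) hRS
    have hempnn : ∀ a, 0 ≤ emp m ω a := emp_nonneg m ω
    have hempsum : ∑ a, emp m ω a = 1 := emp_sum hm1 ω
    have hZle : Zstat P d Δ i' m ω ≤ Qmax := by
      rw [Zstat]
      have hmem : KL (emp m ω) (push (P j) (Atil j)) ∈
          {r | ∃ j', j' ≠ i' ∧ ∃ A ∈ Adm d Δ (P j'), r = KL (emp m ω) (push (P j') A)} :=
        ⟨j, hj, Atil j, hAtil j, rfl⟩
      have hbdd : BddBelow
          {r | ∃ j', j' ≠ i' ∧ ∃ A ∈ Adm d Δ (P j'), r = KL (emp m ω) (push (P j') A)} := by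
        refine ⟨∑ a, (emp m ω a - 1), ?_⟩
        rintro r ⟨j', -, A, hA, rfl⟩
        exact KL_lb _ _ hempnn hA.2.2 (push_le_one (hP j') hA.1)
      refine (csInf_le hbdd hmem).trans ?_
      refine (KL_ub _ _ hempnn hempsum hpos hQjsum).trans ?_
      rw [hQmax]
      exact le_ciSup (f := fun i : Fin M => -Real.log (⨅ y : X, push (P i) (Atil i) y))
        (Set.Finite.bddAbove (Set.finite_range _)) j
    have hmpos : (0 : ℝ) < m := by exact_mod_cast hm1
    have hg : Qmax < gammaTh (Fintype.card X) M β m := by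
      have h1 : Qmax < Real.log (1 / β) / m := by
        rw [lt_div_iff₀ hmpos]
        have hmn' : (m : ℝ) ≤ n := by exact_mod_cast hmn
        nlinarith
      have h2 : Real.log (1 / β) / m ≤ Real.log (Cζ / β) / m := by
        have hle : (1 : ℝ) / β ≤ Cζ / β := by
          apply div_le_div_of_nonneg_right Cz_ge_one hβ.le
        have := Real.log_le_log (by positivity) hle
        gcongr
      have h3 : (0 : ℝ) ≤ 1 / (m : ℝ) ^ (0.85 : ℝ) := by positivity
      have h4 : (0 : ℝ) ≤
          ((Fintype.card X : ℝ) * Real.log ((m : ℝ) + 1) + Real.log ((M : ℝ) - 1)) / m := by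
        apply div_nonneg _ hmpos.le
        have ha : (0 : ℝ) ≤ Real.log ((m : ℝ) + 1) := Real.log_nonneg (by linarith)
        have hb : (0 : ℝ) ≤ Real.log ((M : ℝ) - 1) := by
          apply Real.log_nonneg
          have : (2 : ℝ) ≤ M := by exact_mod_cast hM
          linarith
        have hc : (0 : ℝ) ≤ (Fintype.card X : ℝ) := Nat.cast_nonneg _
        nlinarith
      unfold gammaTh
      linarith
    exact lt_of_le_of_lt hZle hg
  have hle : ((n + 1 : ℕ) : ℕ∞) ≤ Tstar P d Δ β ω := by
    rw [Tstar]
    refine le_iInf fun i' => ?_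
    rw [Ti]
    refine le_sInf fun t ht => ?_
    obtain ⟨m, rfl, hm1, hγ⟩ := ht
    have hnm : n + 1 ≤ m := by
      by_contra hc
      push_neg at hc
      exact absurd hγ (not_le.mpr (key i' m hm1 (Nat.lt_succ_iff.mp hc)))
    exact_mod_cast hnm
  calc (n : ℕ∞) < ((n + 1 : ℕ) : ℕ∞) := by exact_mod_cast Nat.lt_succ_self n
    _ ≤ _ := hle

end AuxLemmas

/-- under H_i, P_i(T* ≤ n) = 0 for every n < log(1/α)/Q_max, so
T* ≥ log(1/α)/Q_max almost surely, and T* → ∞ almost surely as α → 0⁺. -/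
theorem Tstar_lower_bound {X : Type*} [Fintype X] [DecidableEq X] [Nonempty X]
    [MeasurableSpace X]
    {M : ℕ} (hM : 2 ≤ M) (P : Fin M → X → ℝ) (hP : ∀ i, IsDist (P i))
    (hPd : ∀ i j, i ≠ j → P i ≠ P j)
    (d : (X → ℝ) → (X → ℝ) → ℝ) (Δ : ℝ) (hΔ : 0 < Δ)
    (Atil : Fin M → X → X → ℝ) (hAtil : ∀ i, Atil i ∈ Adm d Δ (P i))
    (μ : Fin M → Measure (ℕ → X)) (hμ : ∀ i, IsIID (μ i) (push (P i) (Atil i)))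
    (Qmax : ℝ) (hQmax : Qmax = ⨆ i : Fin M, -Real.log (⨅ y : X, push (P i) (Atil i) y))
    (α : ℝ) (hα0 : 0 < α) (hα1 : α < 1) (i : Fin M) :
    (∀ n : ℕ, (n : ℝ) < Real.log (1 / α) / Qmax →
        μ i {ω | Tstar P d Δ α ω ≤ (n : ℕ∞)} = 0) ∧
    (∀ᵐ ω ∂(μ i), ∀ n : ℕ, Tstar P d Δ α ω ≤ (n : ℕ∞) →
        Real.log (1 / α) / Qmax ≤ (n : ℝ)) ∧
    (∀ᵐ ω ∂(μ i), ∀ N : ℕ, ∀ᶠ β in 𝓝[>] (0 : ℝ), (N : ℕ∞) ≤ Tstar P d Δ β ω) := by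
  -- the alphabet has at least two symbols
  have hX2 : 2 ≤ Fintype.card X := by
    by_contra hc
    push_neg at hc
    have hcard : Fintype.card X = 1 := le_antisymm (by omega) Fintype.card_pos
    obtain ⟨x, hx⟩ := Fintype.card_eq_one_iff.mp hcard
    have hall : ∀ (k : Fin M) (z : X), P k z = 1 := by
      intro k z
      have h1 : ∑ y, P k y = ∑ _y : X, P k z :=
        Finset.sum_congr rfl fun y _ => by rw [(hx y).trans (hx z).symm]
      rw [(hP k).2, Finset.sum_const, Finset.card_univ, hcard, one_smul] at h1
      exact h1.symm
    have h01 : ((⟨0, by omega⟩ : Fin M) : Fin M) ≠ ⟨1, by omega⟩ := by simp [Fin.ext_iff]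
    exact hPd _ _ h01 (funext fun z => (hall _ z).trans (hall _ z).symm)
  -- Qmax is positive
  have hQpos : 0 < Qmax := by
    obtain ⟨hRS, -, hpos⟩ := hAtil i
    obtain ⟨y₀, hy₀, hmin⟩ := exists_ciInf_eq_min (push (P i) (Atil i))
    have hsum : ∑ y, push (P i) (Atil i) y = 1 := push_sum (hP i) hRS
    have hhalf : push (P i) (Atil i) y₀ ≤ 1 / 2 := by
      by_contra hc
      push_neg at hc
      have hlt : ∀ y ∈ (Finset.univ : Finset X), (1 : ℝ) / 2 < push (P i) (Atil i) y :=
        fun y _ => lt_of_lt_of_le hc (hmin y)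
      have := Finset.sum_lt_sum_of_nonempty Finset.univ_nonempty hlt
      rw [hsum, Finset.sum_const, Finset.card_univ, nsmul_eq_mul] at this
      have h2 : (2 : ℝ) ≤ (Fintype.card X : ℝ) := by exact_mod_cast hX2
      nlinarith
    have hneg : Real.log (push (P i) (Atil i) y₀) < 0 :=
      Real.log_neg (hpos y₀) (lt_of_le_of_lt hhalf (by norm_num))
    have h0 : 0 < -Real.log (⨅ y, push (P i) (Atil i) y) := by
      rw [hy₀]; linarith
    rw [hQmax]
    exact lt_of_lt_of_le h0
      (le_ciSup (f := fun i : Fin M => -Real.log (⨅ y : X, push (P i) (Atil i) y))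
        (Set.Finite.bddAbove (Set.finite_range _)) i)
  refine ⟨?_, ?_, ?_⟩
  · intro n hn
    have hempty : {ω | Tstar P d Δ α ω ≤ (n : ℕ∞)} = ∅ := by
      ext ω
      simp only [Set.mem_setOf_eq, Set.mem_empty_iff_false, iff_false, not_le]
      exact core_lemma hM P hP d Δ Atil hAtil Qmax hQmax hQpos α hα0 ω n hn
    rw [hempty]
    exact measure_empty
  · refine ae_of_all _ fun ω n hTn => ?_
    by_contra hc
    exact absurd hTn
      (not_le.mpr (core_lemma hM P hP d Δ Atil hAtil Qmax hQmax hQpos α hα0 ω n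
        (not_le.mp hc)))
  · refine ae_of_all _ fun ω N => ?_
    rcases Nat.eq_zero_or_pos N with hN | hN
    · exact Filter.Eventually.of_forall fun β => by simp [hN]
    · obtain ⟨k, rfl⟩ : ∃ k, N = k + 1 := ⟨N - 1, by omega⟩
      have hmem : Set.Ioo (0 : ℝ) (Real.exp (-(((k : ℝ) + 1) * Qmax))) ∈ 𝓝[>] (0 : ℝ) :=
        Ioo_mem_nhdsGT_of_mem ⟨le_refl 0, Real.exp_pos _⟩
      filter_upwards [hmem] with β hβ
      obtain ⟨hβ0, hβlt⟩ := hβ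
      have hlog : ((k : ℝ) + 1) * Qmax < Real.log (1 / β) := by
        have hll := Real.log_lt_log hβ0 hβlt
        rw [Real.log_exp] at hll
        rw [Real.log_div one_ne_zero hβ0.ne', Real.log_one]
        linarith
      have hk : (k : ℝ) < Real.log (1 / β) / Qmax := by
        rw [lt_div_iff₀ hQpos]
        nlinarith
      have hcore := core_lemma hM P hP d Δ Atil hAtil Qmax hQmax hQpos β hβ0 ω k hk
      have hfin : ((k : ℕ∞)) + 1 ≤ Tstar P d Δ β ω :=
        Order.add_one_le_of_lt hcore
      calc ((k + 1 : ℕ) : ℕ∞) = (k : ℕ∞) + 1 := by push_cast; rfl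
        _ ≤ _ := hfin

end

end AHT
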